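/- Let h : D × D → D be defined by h(ξ,ζ) = ξ − ζ. Then h is continuous (with respect to the maximum of the two J1 metrics on the domain and the J1 metric on the range) at every (ξ,ζ) ∈ D × D such that (ξ(t) − ξ(t−))(ζ(t) − ζ(t−)) = 0 for all t ∈ (0,1]. Moreover, for any j,k ∈ ℤ_+ and any A ⊆ D bounded away from D_{<j,k}, the preimage h^{-1}(A) ⊆ D × D is bounded away from D_{<(j,k)} := ∪_{(l,m)∈I_{<j,k}} D_l × D_m. -/

import Mathlib

open MeasureTheory Filter Topology Set ProbabilityTheory
open scoped ENNReal NNReal Classical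

noncomputable section

/-- `A` is bounded away from `B` (for a distance function `ρ`). -/
def BddAway {S : Type*} (ρ : S → S → ℝ) (A B : Set S) : Prop :=
  ∃ ε > 0, ∀ a ∈ A, ∀ b ∈ B, ε ≤ ρ a b

/-- `M(S∖C)`-convergence of a sequence of measures: convergence of the integrals of every
bounded nonnegative continuous function vanishing on an `r`-neighborhood of `C` for some
`r > 0`. -/
def MConv {S : Type*} [TopologicalSpace S] [MeasurableSpace S] (ρ : S → S → ℝ) (C : Set S)
    (μ : ℕ → Measure S) (μlim : Measure S) : Prop :=
  ∀ f : S → ℝ, Continuous f → (∃ M, ∀ x, |f x| ≤ M) → (∀ x, 0 ≤ f x) →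
    (∃ r > 0, ∀ x, (∃ y ∈ C, ρ y x < r) → f x = 0) →
    Filter.Tendsto (fun n => ∫⁻ x, ENNReal.ofReal (f x) ∂(μ n)) Filter.atTop
      (nhds (∫⁻ x, ENNReal.ofReal (f x) ∂μlim))

/-- Membership in the class `M(S∖C)`: a Borel measure giving no mass to `C`, whose
restriction to the complement of each `r`-neighborhood of `C` is finite. -/
def MemM {S : Type*} [MeasurableSpace S] (ρ : S → S → ℝ) (C : Set S) (μ : Measure S) : Prop :=
  μ C = 0 ∧ ∀ r : ℝ, 0 < r → μ {x | ¬ ∃ y ∈ C, ρ y x < r} < ⊤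

/-- `Y n` is asymptotically equivalent to `X n` with respect to the sequence `eps`. -/
def AsympEquiv {Ω S : Type*} [MeasurableSpace Ω] (P : Measure Ω) (ρ : S → S → ℝ)
    (X Y : ℕ → Ω → S) (eps : ℕ → ℝ) : Prop :=
  ∀ δ : ℝ, 0 < δ →
    Filter.limsup (fun n => (ENNReal.ofReal (eps n))⁻¹ * P {ω | δ ≤ ρ (X n ω) (Y n ω)})
      Filter.atTop = 0

/-- A function `g` is regularly varying at infinity with index `ρ`. -/
def RegVarying (g : ℝ → ℝ) (ρ : ℝ) : Prop :=
  (∀ᶠ s in Filter.atTop, 0 < g s) ∧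
  ∀ c : ℝ, 0 < c →
    Filter.Tendsto (fun s => g (c * s) / g s) Filter.atTop (nhds (c ^ ρ))

/-- The Pareto-type measure `ν_γ` on `(0,∞)` with `ν_γ(x,∞) = x^{-γ}`. -/
def nuPareto (γ : ℝ) : Measure ℝ :=
  (volume.restrict (Set.Ioi (0 : ℝ))).withDensity fun s => ENNReal.ofReal (γ * s ^ (-γ - 1))

/-- The ordered cone `{x : x 0 ≥ x 1 ≥ … }`. -/
def ordCone (j : ℕ) : Set (Fin j → ℝ) := {x | ∀ i i' : Fin j, i ≤ i' → x i' ≤ x i}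

/-- `ν_γ^j`: the `j`-fold product of `ν_γ` restricted to the ordered cone. -/
def nuPow (γ : ℝ) (j : ℕ) : Measure (Fin j → ℝ) :=
  (Measure.pi fun _ => nuPareto γ).restrict (ordCone j)

/-- The joint law of `j` i.i.d. uniform random variables on `[0,1]`. -/
def unifPow (j : ℕ) : Measure (Fin j → ℝ) :=
  Measure.pi fun _ => volume.restrict (Set.Icc (0 : ℝ) 1)

/-- Right-continuity together with existence of left limits, for a function on `[0,1]`. -/
def IsCadlag (f : unitInterval → ℝ) : Prop :=
  (∀ t : unitInterval, Filter.Tendsto f (nhdsWithin t (Set.Ici t)) (nhds (f t))) ∧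
  (∀ t : unitInterval, ∃ L : ℝ, Filter.Tendsto f (nhdsWithin t (Set.Iio t)) (nhds L))

/-- The Skorokhod space `D = D([0,1], ℝ)` of real-valued càdlàg functions on `[0,1]`. -/
structure D where
  toFun : unitInterval → ℝ
  cadlag : IsCadlag toFun

/-- The set of increasing homeomorphisms of `[0,1]` onto itself
(continuous strictly increasing bijections of `[0,1]`). -/
def TimeChanges : Set (unitInterval → unitInterval) :=
  {l | Continuous l ∧ StrictMono l ∧ Function.Bijective l}

/-- The Skorokhod `J₁` distance on `D`:
`d(x,y) = inf_{λ ∈ Λ} (‖λ - id‖_∞ ⊔ ‖x ∘ λ - y‖_∞)`. -/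
def dJ1 (x y : D) : ℝ :=
  sInf ((fun l : unitInterval → unitInterval =>
      max (⨆ t : unitInterval, |(l t : ℝ) - (t : ℝ)|)
          (⨆ t : unitInterval, |x.toFun (l t) - y.toFun t|)) '' TimeChanges)

/-- The Skorokhod `J₁` topology on `D`: the topology generated by the open `dJ1`-balls. -/
instance : TopologicalSpace D :=
  TopologicalSpace.generateFrom {U : Set D | ∃ x ε, U = {y | dJ1 x y < ε}}

instance : MeasurableSpace D := borel D

/-- The step path `t ↦ ∑ i, x i · 1_{[u i, 1]}(t)`. -/
def stepPath {j : ℕ} (x u : Fin j → ℝ) : unitInterval → ℝ :=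
  fun t => ∑ i, if u i ≤ (t : ℝ) then x i else 0

lemma step_right (c u : ℝ) (t : unitInterval) :
    Filter.Tendsto (fun s : unitInterval => if u ≤ (s : ℝ) then c else 0)
      (nhdsWithin t (Set.Ici t)) (nhds (if u ≤ (t : ℝ) then c else 0)) := by
  by_cases h : u ≤ (t : ℝ)
  · rw [if_pos h]
    apply Filter.Tendsto.congr' _ tendsto_const_nhds
    filter_upwards [self_mem_nhdsWithin] with s hs
    rw [if_pos (le_trans h hs)]
  · rw [if_neg h]
    apply Filter.Tendsto.congr' _ tendsto_const_nhds
    have hV : IsOpen {s : unitInterval | (s : ℝ) < u} :=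
      continuous_subtype_val.isOpen_preimage _ isOpen_Iio
    have ht : t ∈ {s : unitInterval | (s : ℝ) < u} := lt_of_not_ge h
    filter_upwards [mem_nhdsWithin_of_mem_nhds (hV.mem_nhds ht)] with s hs
    rw [if_neg (not_le.mpr hs)]

lemma step_left (c u : ℝ) (t : unitInterval) :
    Filter.Tendsto (fun s : unitInterval => if u ≤ (s : ℝ) then c else 0)
      (nhdsWithin t (Set.Iio t)) (nhds (if u < (t : ℝ) then c else 0)) := by
  by_cases h : u < (t : ℝ)
  · rw [if_pos h]
    apply Filter.Tendsto.congr' _ tendsto_const_nhds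
    have hV : IsOpen {s : unitInterval | u < (s : ℝ)} :=
      continuous_subtype_val.isOpen_preimage _ isOpen_Ioi
    filter_upwards [mem_nhdsWithin_of_mem_nhds (hV.mem_nhds h)] with s hs
    rw [if_pos (le_of_lt hs)]
  · rw [if_neg h]
    apply Filter.Tendsto.congr' _ tendsto_const_nhds
    filter_upwards [self_mem_nhdsWithin] with s hs
    have : (s : ℝ) < (t : ℝ) := hs
    rw [if_neg (not_le.mpr (lt_of_lt_of_le this (not_lt.mp h)))]

lemma isCadlag_stepPath {j : ℕ} (x u : Fin j → ℝ) : IsCadlag (stepPath x u) := by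
  constructor
  · intro t
    have := tendsto_finset_sum (Finset.univ)
      (fun i (_ : i ∈ Finset.univ) => step_right (x i) (u i) t)
    exact this
  · intro t
    refine ⟨∑ i, if u i < (t : ℝ) then x i else 0, ?_⟩
    have := tendsto_finset_sum (Finset.univ)
      (fun i (_ : i ∈ Finset.univ) => step_left (x i) (u i) t)
    exact this

/-- The element of `D` determined by jump sizes `x` and jump times `u`. -/
def stepD {j : ℕ} (x u : Fin j → ℝ) : D := ⟨stepPath x u, isCadlag_stepPath x u⟩

/-- `D_j`: nondecreasing step functions vanishing at the origin with exactly `j` jumps. -/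
def Dstep (j : ℕ) : Set D :=
  {ξ | ∃ x u : Fin j → ℝ, (∀ i, 0 < x i) ∧ (∀ i, 0 < u i ∧ u i ≤ 1) ∧
    Function.Injective u ∧ ξ = stepD x u}

/-- `D_{<j} = ⋃_{0 ≤ l < j} D_l`. -/
def DstepLT (j : ℕ) : Set D := {ξ | ∃ l, l < j ∧ ξ ∈ Dstep l}

/-- `D_{≤j} = ⋃_{0 ≤ l ≤ j} D_l`. -/
def DstepLE (j : ℕ) : Set D := {ξ | ∃ l, l ≤ j ∧ ξ ∈ Dstep l}

/-- The two-sided step path `t ↦ ∑ i, x i 1_{[u i,1]}(t) - ∑ i, y i 1_{[v i,1]}(t)`. -/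
def stepPath2 {j k : ℕ} (x u : Fin j → ℝ) (y v : Fin k → ℝ) : unitInterval → ℝ :=
  fun t => stepPath x u t - stepPath y v t

lemma isCadlag_stepPath2 {j k : ℕ} (x u : Fin j → ℝ) (y v : Fin k → ℝ) :
    IsCadlag (stepPath2 x u y v) := by
  obtain ⟨h1, h2⟩ := isCadlag_stepPath x u
  obtain ⟨h1', h2'⟩ := isCadlag_stepPath y v
  constructor
  · intro t; exact (h1 t).sub (h1' t)
  · intro t
    obtain ⟨L, hL⟩ := h2 t
    obtain ⟨L', hL'⟩ := h2' t
    exact ⟨L - L', hL.sub hL'⟩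

/-- The element of `D` with upward jumps `x` at times `u` and downward jumps `y`
at times `v`. -/
def stepD2 {j k : ℕ} (x u : Fin j → ℝ) (y v : Fin k → ℝ) : D :=
  ⟨stepPath2 x u y v, isCadlag_stepPath2 x u y v⟩

/-- `D_{j,k}`: step functions vanishing at the origin with exactly `j` upward jumps and
`k` downward jumps. -/
def Dstep2 (j k : ℕ) : Set D :=
  {ξ | ∃ (x u : Fin j → ℝ) (y v : Fin k → ℝ),
    (∀ i, 0 < x i) ∧ (∀ i, 0 < y i) ∧
    (∀ i, 0 < u i ∧ u i ≤ 1) ∧ (∀ i, 0 < v i ∧ v i ≤ 1) ∧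
    Function.Injective u ∧ Function.Injective v ∧ (∀ i i', u i ≠ v i') ∧
    ξ = stepD2 x u y v}

/-- `D_{<j,k} = ⋃_{(l,m) ∈ I_{<j,k}} D_{l,m}` (for tail indices `α`, `β`). -/
def Dlt2 (α β : ℝ) (j k : ℕ) : Set D :=
  {ξ | ∃ l m : ℕ, (l, m) ≠ (j, k) ∧
    (α - 1) * l + (β - 1) * m ≤ (α - 1) * j + (β - 1) * k ∧ ξ ∈ Dstep2 l m}

/-- The limit measure `C_j = E[ν_α^j {x : ∑ i x i 1_{[U i,1]} ∈ ·}]` on `D`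
(equal to the Dirac mass at the zero path when `j = 0`). -/
def Cmeas (γ : ℝ) (j : ℕ) : Measure D :=
  Measure.map (fun p : (Fin j → ℝ) × (Fin j → ℝ) => stepD p.1 p.2)
    ((nuPow γ j).prod (unifPow j))

/-- The limit measure
`C_{j,k} = E[ν_α^j × ν_β^k {(x,y) : ∑ i x i 1_{[U i,1]} - ∑ i y i 1_{[V i,1]} ∈ ·}]` on `D`
(equal to the Dirac mass at the zero path when `(j,k) = (0,0)`). -/
def Cmeas2 (α β : ℝ) (j k : ℕ) : Measure D :=
  Measure.map (fun p : ((Fin j → ℝ) × (Fin j → ℝ)) × ((Fin k → ℝ) × (Fin k → ℝ)) =>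
      stepD2 p.1.1 p.1.2 p.2.1 p.2.2)
    (((nuPow α j).prod (unifPow j)).prod ((nuPow β k).prod (unifPow k)))

lemma isCadlag_const (c : ℝ) : IsCadlag (fun _ => c) :=
  ⟨fun _ => tendsto_const_nhds, fun _ => ⟨c, tendsto_const_nhds⟩⟩

/-- Build an element of `D` from a function (with a junk default for non-càdlàg input). -/
def mkD (f : unitInterval → ℝ) : D :=
  if h : IsCadlag f then ⟨f, h⟩ else ⟨fun _ => 0, isCadlag_const 0⟩

/-- `A_δ = {x : d(x, A) ≤ δ}` in `D`. -/
def thickenD (δ : ℝ) (A : Set D) : Set D := {x | ∀ ε > 0, ∃ a ∈ A, dJ1 a x < δ + ε}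

/-- Pointwise difference of two càdlàg paths. -/
def Dsub (ξ ζ : D) : D :=
  ⟨fun t => ξ.toFun t - ζ.toFun t, by
    obtain ⟨h1, h2⟩ := ξ.cadlag
    obtain ⟨h1', h2'⟩ := ζ.cadlag
    refine ⟨fun t => (h1 t).sub (h1' t), fun t => ?_⟩
    obtain ⟨L, hL⟩ := h2 t
    obtain ⟨L', hL'⟩ := h2' t
    exact ⟨L - L', hL.sub hL'⟩⟩

-- ===== Auxiliary lemmas =====

lemma unitAbs_le_one (s t : unitInterval) : |(s:ℝ) - (t:ℝ)| ≤ 1 :=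
  abs_le.mpr ⟨by linarith [s.2.1, t.2.2], by linarith [s.2.2, t.2.1]⟩

lemma id_mem_timeChanges : (fun t : unitInterval => t) ∈ TimeChanges :=
  ⟨continuous_id, strictMono_id, Function.bijective_id⟩

lemma tc_zero {l : unitInterval → unitInterval} (hl : l ∈ TimeChanges) : l 0 = 0 := by
  obtain ⟨s, hs⟩ := hl.2.2.2 0
  have h1 : l 0 ≤ l s := hl.2.1.monotone (by exact Subtype.coe_le_coe.mp s.2.1)
  rw [hs] at h1
  exact le_antisymm h1 (by exact Subtype.coe_le_coe.mp (l 0).2.1)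

lemma tc_one {l : unitInterval → unitInterval} (hl : l ∈ TimeChanges) : l 1 = 1 := by
  obtain ⟨s, hs⟩ := hl.2.2.2 1
  have h1 : l s ≤ l 1 := hl.2.1.monotone (by exact Subtype.coe_le_coe.mp s.2.2)
  rw [hs] at h1
  exact le_antisymm (by exact Subtype.coe_le_coe.mp (l 1).2.2) h1

lemma tc_comp {l1 l2 : unitInterval → unitInterval} (h1 : l1 ∈ TimeChanges)
    (h2 : l2 ∈ TimeChanges) : (fun t => l1 (l2 t)) ∈ TimeChanges :=
  ⟨h1.1.comp h2.1, h1.2.1.comp h2.2.1, h1.2.2.comp h2.2.2⟩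

lemma tc_inv {l : unitInterval → unitInterval} (hl : l ∈ TimeChanges) :
    ∃ li ∈ TimeChanges, (∀ t, l (li t) = t) ∧ (∀ t, li (l t) = t) := by
  classical
  let e := Equiv.ofBijective l hl.2.2
  have hc : Continuous e := hl.1
  let h := hc.homeoOfEquivCompactToT2
  have hmono : StrictMono e.symm := by
    intro a b hab
    rcases lt_or_ge (e.symm a) (e.symm b) with h' | h'
    · exact h'
    · exfalso
      have : b ≤ a := by
        have := hl.2.1.monotone h'
        rwa [show l (e.symm b) = b from e.apply_symm_apply b,
          show l (e.symm a) = a from e.apply_symm_apply a] at this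
      exact absurd hab (not_lt.mpr this)
  exact ⟨e.symm, ⟨h.symm.continuous, hmono, e.symm.bijective⟩,
    fun t => e.apply_symm_apply t, fun t => e.symm_apply_apply t⟩

lemma IsCadlag.bounded {f : unitInterval → ℝ} (hf : IsCadlag f) : ∃ M, ∀ t, |f t| ≤ M := by
  have key : ∀ p : unitInterval, ∃ δ > 0, ∃ Mp, ∀ s : unitInterval,
      dist s p < δ → |f s| ≤ Mp := by
    intro p
    obtain ⟨δ1, hδ1, h1⟩ := Metric.tendsto_nhdsWithin_nhds.mp (hf.1 p) 1 one_pos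
    obtain ⟨L, hL⟩ := hf.2 p
    obtain ⟨δ2, hδ2, h2⟩ := Metric.tendsto_nhdsWithin_nhds.mp hL 1 one_pos
    refine ⟨min δ1 δ2, by positivity, |f p| + |L| + 1, fun s hs => ?_⟩
    rcases le_or_gt p s with h | h
    · have := h1 (mem_Ici.mpr h) (lt_of_lt_of_le hs (min_le_left _ _))
      rw [Real.dist_eq] at this
      have h3 : |f s| - |f p| ≤ |f s - f p| := abs_sub_abs_le_abs_sub _ _
      have h4 : 0 ≤ |L| := abs_nonneg L
      linarith
    · have := h2 (mem_Iio.mpr h) (lt_of_lt_of_le hs (min_le_right _ _))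
      rw [Real.dist_eq] at this
      have h3 : |f s| - |L| ≤ |f s - L| := abs_sub_abs_le_abs_sub _ _
      have h4 : 0 ≤ |f p| := abs_nonneg _
      linarith
  choose δ hδ Mp hMp using key
  obtain ⟨F, hF⟩ := isCompact_univ.elim_finite_subcover
    (fun p : unitInterval => Metric.ball p (δ p)) (fun p => Metric.isOpen_ball)
    (fun t _ => mem_iUnion.mpr ⟨t, Metric.mem_ball_self (hδ t)⟩)
  have hFne : F.Nonempty := by
    rcases Finset.eq_empty_or_nonempty F with h | h
    · exfalso
      have := hF (mem_univ 0)
      simp [h] at this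
    · exact h
  refine ⟨F.sup' hFne Mp, fun t => ?_⟩
  have := hF (mem_univ t)
  simp only [mem_iUnion] at this
  obtain ⟨p, hp, htp⟩ := this
  exact le_trans (hMp p t (Metric.mem_ball.mp htp)) (Finset.le_sup' Mp hp)

lemma J1set_nonempty (x y : D) : ((fun l : unitInterval → unitInterval =>
      max (⨆ t : unitInterval, |(l t : ℝ) - (t : ℝ)|)
          (⨆ t : unitInterval, |x.toFun (l t) - y.toFun t|)) '' TimeChanges).Nonempty :=
  ⟨_, Set.mem_image_of_mem _ id_mem_timeChanges⟩

lemma J1set_nonneg (x y : D) : ∀ a ∈ ((fun l : unitInterval → unitInterval =>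
      max (⨆ t : unitInterval, |(l t : ℝ) - (t : ℝ)|)
          (⨆ t : unitInterval, |x.toFun (l t) - y.toFun t|)) '' TimeChanges), 0 ≤ a := by
  rintro a ⟨l, hl, rfl⟩
  exact le_trans (Real.iSup_nonneg fun t => abs_nonneg _) (le_max_left _ _)

lemma dJ1_nonneg (x y : D) : 0 ≤ dJ1 x y :=
  le_csInf (J1set_nonempty x y) (J1set_nonneg x y)

lemma dJ1_le {x y : D} {l : unitInterval → unitInterval} (hl : l ∈ TimeChanges) :
    dJ1 x y ≤ max (⨆ t : unitInterval, |(l t : ℝ) - (t : ℝ)|)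
          (⨆ t : unitInterval, |x.toFun (l t) - y.toFun t|) :=
  csInf_le ⟨0, J1set_nonneg x y⟩ (Set.mem_image_of_mem _ hl)

lemma dJ1_le_of_bounds {x y : D} {l : unitInterval → unitInterval} {c : ℝ}
    (hl : l ∈ TimeChanges) (hc : 0 ≤ c) (h1 : ∀ t : unitInterval, |(l t : ℝ) - (t:ℝ)| ≤ c)
    (h2 : ∀ t : unitInterval, |x.toFun (l t) - y.toFun t| ≤ c) : dJ1 x y ≤ c :=
  (dJ1_le hl).trans (max_le (Real.iSup_le h1 hc) (Real.iSup_le h2 hc))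

lemma dJ1_self (x : D) : dJ1 x x = 0 :=
  le_antisymm (dJ1_le_of_bounds id_mem_timeChanges le_rfl
    (fun t => by simp) (fun t => by simp)) (dJ1_nonneg x x)

lemma exists_tc_of_dJ1_lt {x y : D} {c : ℝ} (h : dJ1 x y < c) :
    ∃ l ∈ TimeChanges, (∀ t : unitInterval, |(l t : ℝ) - (t:ℝ)| < c) ∧
      (∀ t : unitInterval, |x.toFun (l t) - y.toFun t| < c) := by
  obtain ⟨a, ⟨l, hl, rfl⟩, hac⟩ := exists_lt_of_csInf_lt (J1set_nonempty x y) h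
  obtain ⟨M1, hM1⟩ := x.cadlag.bounded
  obtain ⟨M2, hM2⟩ := y.cadlag.bounded
  refine ⟨l, hl, fun t => ?_, fun t => ?_⟩
  · have hb : BddAbove (range fun t : unitInterval => |(l t : ℝ) - (t:ℝ)|) :=
      ⟨1, by rintro _ ⟨t, rfl⟩; exact unitAbs_le_one _ _⟩
    exact lt_of_le_of_lt (le_trans (le_ciSup hb t) (le_max_left _ _)) hac
  · have hb : BddAbove (range fun t : unitInterval => |x.toFun (l t) - y.toFun t|) := by
      refine ⟨M1 + M2, ?_⟩
      rintro _ ⟨t, rfl⟩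
      calc |x.toFun (l t) - y.toFun t| ≤ |x.toFun (l t)| + |y.toFun t| := abs_sub _ _
        _ ≤ M1 + M2 := add_le_add (hM1 _) (hM2 _)
    exact lt_of_le_of_lt (le_trans (le_ciSup hb t) (le_max_right _ _)) hac




lemma fiber_rep {n : ℕ} (z q : Fin n → ℝ) (T : Finset ℝ) (hq : ∀ i, q i ∈ T) (t : ℝ) :
    (∑ i, if q i ≤ t then z i else 0)
      = ∑ s ∈ T, if s ≤ t then (∑ i ∈ Finset.univ.filter (fun i => q i = s), z i) else 0 := by
  classical
  rw [← Finset.sum_fiberwise_of_maps_to (fun i _ => hq i) (fun i => if q i ≤ t then z i else 0)]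
  refine Finset.sum_congr rfl fun s _ => ?_
  by_cases h : s ≤ t
  · rw [if_pos h]
    refine Finset.sum_congr rfl fun i hi => ?_
    have hqi : q i = s := (Finset.mem_filter.mp hi).2
    rw [if_pos (hqi ▸ h)]
  · rw [if_neg h]
    refine Finset.sum_eq_zero fun i hi => ?_
    have hqi : q i = s := (Finset.mem_filter.mp hi).2
    rw [if_neg (by rw [hqi]; exact h)]

lemma merge_step {l m : ℕ} (x u : Fin l → ℝ) (y w : Fin m → ℝ)
    (hx : ∀ i, 0 < x i) (hy : ∀ i, 0 < y i)
    (hu : ∀ i, 0 < u i ∧ u i ≤ 1) (hw : ∀ i, 0 < w i ∧ w i ≤ 1) :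
    ∃ (l' m' : ℕ) (x' u' : Fin l' → ℝ) (y' v' : Fin m' → ℝ),
      l' ≤ l ∧ m' ≤ m ∧
      (∀ i, 0 < x' i) ∧ (∀ i, 0 < y' i) ∧
      (∀ i, 0 < u' i ∧ u' i ≤ 1) ∧ (∀ i, 0 < v' i ∧ v' i ≤ 1) ∧
      Function.Injective u' ∧ Function.Injective v' ∧ (∀ i i', u' i ≠ v' i') ∧
      (∀ t : ℝ, ((∑ i, if u i ≤ t then x i else 0) - (∑ i, if w i ≤ t then y i else 0))
        = (∑ i, if u' i ≤ t then x' i else 0) - (∑ i, if v' i ≤ t then y' i else 0)) := by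
  classical
  set T : Finset ℝ := (Finset.image u Finset.univ) ∪ (Finset.image w Finset.univ) with hT
  set g : ℝ → ℝ := fun s => (∑ i ∈ Finset.univ.filter (fun i => u i = s), x i)
      - (∑ i ∈ Finset.univ.filter (fun i => w i = s), y i) with hg
  set Tp := T.filter (fun s => 0 < g s) with hTp
  set Tn := T.filter (fun s => g s < 0) with hTn
  have hmemT : ∀ s ∈ T, 0 < s ∧ s ≤ 1 := by
    intro s hs
    rcases Finset.mem_union.mp hs with h | h
    · obtain ⟨i, _, rfl⟩ := Finset.mem_image.mp h; exact hu i
    · obtain ⟨i, _, rfl⟩ := Finset.mem_image.mp h; exact hw i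
  have huT : ∀ i, u i ∈ T := fun i => Finset.mem_union_left _ (Finset.mem_image_of_mem _ (Finset.mem_univ i))
  have hwT : ∀ i, w i ∈ T := fun i => Finset.mem_union_right _ (Finset.mem_image_of_mem _ (Finset.mem_univ i))
  -- combined representation
  have hrep : ∀ t : ℝ, ((∑ i, if u i ≤ t then x i else 0) - (∑ i, if w i ≤ t then y i else 0))
      = ∑ s ∈ T, if s ≤ t then g s else 0 := by
    intro t
    rw [fiber_rep x u T huT t, fiber_rep y w T hwT t, ← Finset.sum_sub_distrib]
    refine Finset.sum_congr rfl fun s _ => ?_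
    by_cases h : s ≤ t <;> simp [h, hg]
  -- split into positive and negative parts
  have hdisj : Disjoint Tp Tn := by
    rw [Finset.disjoint_left]
    intro s hsp hsn
    exact absurd ((Finset.mem_filter.mp hsp).2) (not_lt.mpr (le_of_lt (Finset.mem_filter.mp hsn).2))
  have hsub : Tp ∪ Tn ⊆ T := by
    intro s hs
    rcases Finset.mem_union.mp hs with h | h
    exacts [(Finset.mem_filter.mp h).1, (Finset.mem_filter.mp h).1]
  have hsplit : ∀ t : ℝ, (∑ s ∈ T, if s ≤ t then g s else 0)
      = (∑ s ∈ Tp, if s ≤ t then g s else 0) + (∑ s ∈ Tn, if s ≤ t then g s else 0) := by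
    intro t
    rw [← Finset.sum_union hdisj]
    refine (Finset.sum_subset hsub fun s hs hns => ?_).symm
    have h1 : ¬ 0 < g s := fun h => hns (Finset.mem_union_left _ (Finset.mem_filter.mpr ⟨hs, h⟩))
    have h2 : ¬ g s < 0 := fun h => hns (Finset.mem_union_right _ (Finset.mem_filter.mpr ⟨hs, h⟩))
    have : g s = 0 := le_antisymm (not_lt.mp h1) (not_lt.mp h2)
    simp [this]
  -- enumerations
  set l' := Tp.card with hl'
  set m' := Tn.card with hm'
  set ep : Fin l' ≃ {s // s ∈ Tp} := Tp.equivFin.symm with hep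
  set en : Fin m' ≃ {s // s ∈ Tn} := Tn.equivFin.symm with hen
  set u' : Fin l' → ℝ := fun i => (ep i : ℝ) with hu'
  set v' : Fin m' → ℝ := fun i => (en i : ℝ) with hv'
  set x' : Fin l' → ℝ := fun i => g (u' i) with hx'
  set y' : Fin m' → ℝ := fun i => -(g (v' i)) with hy'
  have hmemp : ∀ i, u' i ∈ Tp := fun i => (ep i).2
  have hmemn : ∀ i, v' i ∈ Tn := fun i => (en i).2
  have hgp : ∀ i, 0 < g (u' i) := fun i => (Finset.mem_filter.mp (hmemp i)).2
  have hgn : ∀ i, g (v' i) < 0 := fun i => (Finset.mem_filter.mp (hmemn i)).2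
  -- cards
  have hcardp : l' ≤ l := by
    have h1 : Tp ⊆ Finset.image u Finset.univ := by
      intro s hs
      by_contra hc
      have hemp : Finset.univ.filter (fun i => u i = s) = ∅ := by
        rw [Finset.filter_eq_empty_iff]
        intro i _ hui
        exact hc (Finset.mem_image.mpr ⟨i, Finset.mem_univ i, hui⟩)
      have : g s ≤ 0 := by
        rw [hg]
        simp only [hemp, Finset.sum_empty]
        have : (0:ℝ) ≤ ∑ i ∈ Finset.univ.filter (fun i => w i = s), y i :=
          Finset.sum_nonneg fun i _ => (hy i).le
        linarith
      exact absurd (Finset.mem_filter.mp hs).2 (not_lt.mpr this)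
    calc l' ≤ (Finset.image u Finset.univ).card := Finset.card_le_card h1
      _ ≤ Finset.univ.card := Finset.card_image_le
      _ = l := by simp
  have hcardn : m' ≤ m := by
    have h1 : Tn ⊆ Finset.image w Finset.univ := by
      intro s hs
      by_contra hc
      have hemp : Finset.univ.filter (fun i => w i = s) = ∅ := by
        rw [Finset.filter_eq_empty_iff]
        intro i _ hwi
        exact hc (Finset.mem_image.mpr ⟨i, Finset.mem_univ i, hwi⟩)
      have : 0 ≤ g s := by
        rw [hg]
        simp only [hemp, Finset.sum_empty]
        have : (0:ℝ) ≤ ∑ i ∈ Finset.univ.filter (fun i => u i = s), x i :=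
          Finset.sum_nonneg fun i _ => (hx i).le
        linarith
      exact absurd (Finset.mem_filter.mp hs).2 (not_lt.mpr this)
    calc m' ≤ (Finset.image w Finset.univ).card := Finset.card_le_card h1
      _ ≤ Finset.univ.card := Finset.card_image_le
      _ = m := by simp
  refine ⟨l', m', x', u', y', v', hcardp, hcardn, hgp, fun i => by simpa [hy'] using hgn i,
    fun i => hmemT _ (hsub (Finset.mem_union_left _ (hmemp i))),
    fun i => hmemT _ (hsub (Finset.mem_union_right _ (hmemn i))),
    ?_, ?_, ?_, ?_⟩
  · intro i j hij
    exact ep.injective (Subtype.ext hij)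
  · intro i j hij
    exact en.injective (Subtype.ext hij)
  · intro i j hij
    have := hgp i
    rw [hij] at this
    exact absurd this (not_lt.mpr (hgn j).le)
  · intro t
    rw [hrep t, hsplit t]
    have hp : (∑ s ∈ Tp, if s ≤ t then g s else 0) = ∑ i, if u' i ≤ t then x' i else 0 := by
      rw [← Finset.sum_coe_sort Tp (fun s => if s ≤ t then g s else 0),
        ← Equiv.sum_comp ep (fun s : {s // s ∈ Tp} => if (s : ℝ) ≤ t then g s else 0)]
    have hn : (∑ s ∈ Tn, if s ≤ t then g s else 0) = -(∑ i, if v' i ≤ t then y' i else 0) := by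
      rw [← Finset.sum_coe_sort Tn (fun s => if s ≤ t then g s else 0),
        ← Equiv.sum_comp en (fun s : {s // s ∈ Tn} => if (s : ℝ) ≤ t then g s else 0),
        ← Finset.sum_neg_distrib]
      refine Finset.sum_congr rfl fun i _ => ?_
      by_cases h : (en i : ℝ) ≤ t <;> simp [h, hy', hv']
    rw [hp, hn]
    ring


lemma part2_lemma (α β : ℝ) (hα : 1 < α) (hβ : 1 < β) (j k : ℕ) (A : Set D)
    (hA : BddAway dJ1 A (Dlt2 α β j k)) :
    BddAway (fun p q : D × D => max (dJ1 p.1 q.1) (dJ1 p.2 q.2))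
      {p : D × D | Dsub p.1 p.2 ∈ A}
      {p : D × D | ∃ l m : ℕ, ((l, m) ≠ (j, k) ∧
        (α - 1) * l + (β - 1) * m ≤ (α - 1) * j + (β - 1) * k) ∧
        p.1 ∈ Dstep l ∧ p.2 ∈ Dstep m} := by
  classical
  obtain ⟨ε0, hε0, hAway⟩ := hA
  refine ⟨ε0/3, by linarith, ?_⟩
  rintro ⟨ξ, ζ⟩ hmemA ⟨η, η'⟩ ⟨l, m, ⟨hne, hwt⟩, hη, hη'⟩
  by_contra hcon
  push_neg at hcon
  have h1 : dJ1 ξ η < ε0/3 := lt_of_le_of_lt (le_max_left _ _) hcon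
  have h2 : dJ1 ζ η' < ε0/3 := lt_of_le_of_lt (le_max_right _ _) hcon
  obtain ⟨xs, us, hxs, hus, husi, rfl⟩ := hη
  obtain ⟨ys, vs, hys, hvs, hvsi, rfl⟩ := hη'
  obtain ⟨lam1, hlam1, hlam1a, hlam1b⟩ := exists_tc_of_dJ1_lt h1
  obtain ⟨lam2, hlam2, hlam2a, hlam2b⟩ := exists_tc_of_dJ1_lt h2
  obtain ⟨l2i, hl2i, hl2i1, hl2i2⟩ := tc_inv hlam2
  obtain ⟨l1i, hl1i, hl1i1, hl1i2⟩ := tc_inv hlam1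
  set μ : unitInterval → unitInterval := fun t => l2i (lam1 t) with hμdef
  set μi : unitInterval → unitInterval := fun t => l1i (lam2 t) with hμidef
  have hμmem : μ ∈ TimeChanges := tc_comp hl2i hlam1
  have hμimem : μi ∈ TimeChanges := tc_comp hl1i hlam2
  have hμμi : ∀ t, μ (μi t) = t := by
    intro t; show l2i (lam1 (l1i (lam2 t))) = t; rw [hl1i1, hl2i2]
  have hμiμ : ∀ t, μi (μ t) = t := by
    intro t; show l1i (lam2 (l2i (lam1 t))) = t; rw [hl2i1, hl1i2]
  have hle : ∀ (a t : unitInterval), a ≤ μ t ↔ μi a ≤ t := by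
    intro a t
    constructor
    · intro h
      have := hμimem.2.1.monotone h
      rwa [hμiμ] at this
    · intro h
      have := hμmem.2.1.monotone h
      rwa [hμμi] at this
  set vI : Fin m → unitInterval := fun i => ⟨vs i, ⟨(hvs i).1.le, (hvs i).2⟩⟩ with hvI
  set w : Fin m → ℝ := fun i => (μi (vI i) : ℝ) with hwdef
  have hw : ∀ i, 0 < w i ∧ w i ≤ 1 := by
    intro i
    refine ⟨?_, (μi (vI i)).2.2⟩
    have h0 : (0 : unitInterval) < vI i := Subtype.coe_lt_coe.mp (by exact (hvs i).1)
    have := hμimem.2.1 h0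
    rw [tc_zero hμimem] at this
    exact Subtype.coe_lt_coe.mpr this
  have hstep : ∀ t : unitInterval,
      (stepD ys vs).toFun (μ t) = ∑ i, if w i ≤ (t:ℝ) then ys i else 0 := by
    intro t
    show (∑ i, if vs i ≤ (↑(μ t):ℝ) then ys i else 0) = _
    refine Finset.sum_congr rfl fun i _ => ?_
    have : vs i ≤ (↑(μ t):ℝ) ↔ w i ≤ (t:ℝ) := by
      rw [show vs i = ((vI i : unitInterval) : ℝ) from rfl, Subtype.coe_le_coe]
      rw [hle (vI i) t, hwdef]
      exact Subtype.coe_le_coe.symm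
    by_cases h : vs i ≤ (↑(μ t):ℝ)
    · rw [if_pos h, if_pos (this.mp h)]
    · rw [if_neg h, if_neg (fun hc => h (this.mpr hc))]
  obtain ⟨l', m', x', u', y', v', hcardp, hcardn, hx', hy', hu', hv', hui', hvi', huv', hfun⟩ :=
    merge_step xs us ys w hxs hys hus hw
  set χ : D := stepD2 x' u' y' v' with hχdef
  have hχmem : χ ∈ Dlt2 α β j k := by
    have hllr : ((l':ℝ) ≤ l) := Nat.cast_le.mpr hcardp
    have hmmr : ((m':ℝ) ≤ m) := Nat.cast_le.mpr hcardn
    have hwt' : (α - 1) * l' + (β - 1) * m' ≤ (α - 1) * j + (β - 1) * k := by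
      have e1 : (α - 1) * (l':ℝ) ≤ (α - 1) * l :=
        mul_le_mul_of_nonneg_left hllr (by linarith)
      have e2 : (β - 1) * (m':ℝ) ≤ (β - 1) * m :=
        mul_le_mul_of_nonneg_left hmmr (by linarith)
      linarith
    refine ⟨l', m', ?_, hwt', x', u', y', v', hx', hy', hu', hv', hui', hvi', huv', rfl⟩
    intro heq
    have hl'j : l' = j := (Prod.mk.injEq _ _ _ _).mp heq |>.1
    have hm'k : m' = k := (Prod.mk.injEq _ _ _ _).mp heq |>.2
    have h3 : l' ≠ l ∨ m' ≠ m := by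
      by_contra h
      push_neg at h
      exact hne (by rw [← h.1, ← h.2, hl'j, hm'k])
    have hstrict : (α - 1) * l' + (β - 1) * m' < (α - 1) * l + (β - 1) * m := by
      rcases h3 with h | h
      · have hlt : (l':ℝ) < l := Nat.cast_lt.mpr (lt_of_le_of_ne hcardp h)
        have e2 : (β - 1) * (m':ℝ) ≤ (β - 1) * m :=
          mul_le_mul_of_nonneg_left hmmr (by linarith)
        nlinarith
      · have hlt : (m':ℝ) < m := Nat.cast_lt.mpr (lt_of_le_of_ne hcardn h)
        have e1 : (α - 1) * (l':ℝ) ≤ (α - 1) * l :=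
          mul_le_mul_of_nonneg_left hllr (by linarith)
        nlinarith
    rw [hl'j, hm'k] at hstrict
    linarith
  have hdist : dJ1 (Dsub ξ ζ) χ ≤ 2 * (ε0/3) := by
    refine dJ1_le_of_bounds hlam1 (by linarith) (fun t => ?_) (fun t => ?_)
    · have := hlam1a t
      linarith [abs_nonneg ((↑(lam1 t):ℝ) - t)]
    · have hχt : χ.toFun t = (stepD xs us).toFun t - (stepD ys vs).toFun (μ t) := by
        show (∑ i, if u' i ≤ (t:ℝ) then x' i else 0) - (∑ i, if v' i ≤ (t:ℝ) then y' i else 0)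
          = _
        rw [← hfun (t:ℝ), hstep t]
        rfl
      have e1 : |ξ.toFun (lam1 t) - (stepD xs us).toFun t| < ε0/3 := hlam1b t
      have e2 : |ζ.toFun (lam1 t) - (stepD ys vs).toFun (μ t)| < ε0/3 := by
        have hlam : lam2 (μ t) = lam1 t := hl2i1 (lam1 t)
        have := hlam2b (μ t)
        rwa [hlam] at this
      have : (Dsub ξ ζ).toFun (lam1 t) - χ.toFun t
          = (ξ.toFun (lam1 t) - (stepD xs us).toFun t)
            - (ζ.toFun (lam1 t) - (stepD ys vs).toFun (μ t)) := by
        rw [hχt]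
        show ξ.toFun (lam1 t) - ζ.toFun (lam1 t) - _ = _
        ring
      rw [this]
      calc |(ξ.toFun (lam1 t) - (stepD xs us).toFun t)
            - (ζ.toFun (lam1 t) - (stepD ys vs).toFun (μ t))|
          ≤ |ξ.toFun (lam1 t) - (stepD xs us).toFun t|
            + |ζ.toFun (lam1 t) - (stepD ys vs).toFun (μ t)| := abs_sub _ _
        _ ≤ 2 * (ε0/3) := by linarith
  have := hAway (Dsub ξ ζ) hmemA χ hχmem
  linarith


-- ===== kink machinery =====


def kink (a k : ℝ) : ℝ → ℝ := fun t => if t ≤ a then t else a + k * (t - a)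

lemma kink_le {a k v : ℝ} (h : v ≤ a) : kink a k v = v := if_pos h

lemma kink_ge {a k v : ℝ} (h : a ≤ v) : kink a k v = a + k * (v - a) := by
  unfold kink
  rcases eq_or_lt_of_le h with h' | h'
  · rw [if_pos h'.symm.le, ← h']; ring
  · rw [if_neg (not_le.mpr h')]

lemma kink_strictMono {a k : ℝ} (hk : 0 < k) : StrictMono (kink a k) := by
  intro s t hst
  unfold kink
  by_cases hs : s ≤ a <;> by_cases ht : t ≤ a
  · rw [if_pos hs, if_pos ht]; exact hst
  · rw [if_pos hs, if_neg ht]; push_neg at ht; nlinarith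
  · push_neg at hs; exfalso; linarith
  · rw [if_neg hs, if_neg ht]; push_neg at hs ht; nlinarith

lemma kink_inv {a k : ℝ} (hk : 0 < k) : ∀ t, kink a (1/k) (kink a k t) = t := by
  intro t
  unfold kink
  by_cases h : t ≤ a
  · rw [if_pos h, if_pos h]
  · rw [if_neg h]
    push_neg at h
    have h2 : ¬ (a + k * (t - a) ≤ a) := by push_neg; nlinarith
    rw [if_neg h2]
    field_simp
    ring

lemma kink_surj {a k : ℝ} (hk : 0 < k) : Function.Surjective (kink a k) := by
  intro y
  refine ⟨kink a (1/k) y, ?_⟩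
  have h1 : 0 < 1/k := by positivity
  have := kink_inv (a := a) h1 y
  rwa [one_div_one_div] at this

lemma affine_abs_bound {p q aL aR δ : ℝ} (h : aL ≤ aR)
    (hL : |p * aL + q - aL| ≤ δ) (hR : |p * aR + q - aR| ≤ δ) :
    ∀ t, aL ≤ t → t ≤ aR → |p * t + q - t| ≤ δ := by
  intro t h1 h2
  obtain ⟨hL1, hL2⟩ := abs_le.mp hL
  obtain ⟨hR1, hR2⟩ := abs_le.mp hR
  rcases le_total 0 (p - 1) with hp | hp
  · refine abs_le.mpr ⟨?_, ?_⟩ <;> nlinarith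
  · refine abs_le.mpr ⟨?_, ?_⟩ <;> nlinarith

lemma kink_ind (δ : ℝ) (hδ : 0 ≤ δ) :
    ∀ (L : List (ℝ × ℝ)) (a0 b0 : ℝ), |a0 - b0| ≤ δ →
      List.Pairwise (fun p q : ℝ × ℝ => p.1 < q.1 ∧ p.2 < q.2) ((a0, b0) :: L) →
      (∀ p ∈ L, |p.1 - p.2| ≤ δ) →
      ∃ (φ : ℝ → ℝ) (aL bL s : ℝ),
        StrictMono φ ∧ Function.Surjective φ ∧ 0 < s ∧
        ((aL, bL) ∈ (a0, b0) :: L) ∧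
        (∀ p ∈ (a0, b0) :: L, p.1 ≤ aL ∧ p.2 ≤ bL) ∧
        (∀ t, t ≤ a0 → φ t = t + (b0 - a0)) ∧
        (∀ p ∈ L, φ p.1 = p.2) ∧
        (∀ t, aL ≤ t → φ t = bL + s * (t - aL)) ∧
        (∀ t, a0 ≤ t → t ≤ aL → |φ t - t| ≤ δ) := by
  intro L
  induction L using List.reverseRecOn with
  | nil =>
    intro a0 b0 h0 _ _
    refine ⟨fun t => t + (b0 - a0), a0, b0, 1, ?_, ?_, one_pos, by simp, ?_, fun t _ => rfl,
      by simp, fun t _ => by ring, ?_⟩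
    · intro s t hst; simpa using hst
    · intro y; exact ⟨y - (b0 - a0), by ring⟩
    · rintro p hp
      simp only [List.mem_singleton] at hp
      subst hp; exact ⟨le_rfl, le_rfl⟩
    · intro t _ _
      show |t + (b0 - a0) - t| ≤ δ
      rwa [show t + (b0 - a0) - t = -(a0 - b0) by ring, abs_neg]
  | append_singleton L' pr ih =>
    intro a0 b0 h0 hpw hclose
    have heq : (a0, b0) :: (L' ++ [pr]) = ((a0, b0) :: L') ++ [pr] := rfl
    rw [heq] at hpw
    have hpw' : List.Pairwise _ ((a0, b0) :: L') := hpw.sublist (List.sublist_append_left _ _)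
    obtain ⟨φ', aL, bL, s, hmono, hsurj, hs, hmem, hmax, hbelow, hanch, htail, hbound⟩ :=
      ih a0 b0 h0 hpw' (fun p hp => hclose p (List.mem_append_left _ hp))
    have hlastR : aL < pr.1 ∧ bL < pr.2 :=
      (List.pairwise_append.mp hpw).2.2 _ hmem _ (by simp)
    set k := (pr.2 - bL) / (s * (pr.1 - aL)) with hk
    have hne : s * (pr.1 - aL) ≠ 0 := by
      have : 0 < s * (pr.1 - aL) := mul_pos hs (by linarith [hlastR.1])
      linarith
    have hkpos : 0 < k := div_pos (by linarith [hlastR.2]) (mul_pos hs (by linarith [hlastR.1]))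
    have haLbL : φ' aL = bL := by simpa using htail aL le_rfl
    have hb0bL : b0 ≤ bL := (hmax (a0, b0) (List.mem_cons_self)).2
    have ha0aL : a0 ≤ aL := (hmax (a0, b0) (List.mem_cons_self)).1
    have haux : bL + k * (s * (pr.1 - aL)) = pr.2 := by
      rw [hk, div_mul_cancel₀ _ hne]; ring
    have hφpr : kink bL k (φ' pr.1) = pr.2 := by
      rw [htail pr.1 hlastR.1.le, kink_ge (by nlinarith [hlastR.1]), ← haux]; ring
    have hALδ : |aL - bL| ≤ δ := by
      rcases (List.mem_cons.mp hmem) with h | h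
      · have h1 : aL = a0 := congrArg Prod.fst h
        have h2 : bL = b0 := congrArg Prod.snd h
        rw [h1, h2]; exact h0
      · exact hclose _ (List.mem_append_left _ h)
    refine ⟨fun t => kink bL k (φ' t), pr.1, pr.2, k * s,
      (kink_strictMono hkpos).comp hmono, (kink_surj hkpos).comp hsurj,
      mul_pos hkpos hs, by simp, ?_, ?_, ?_, ?_, ?_⟩
    · rintro p hp
      rcases List.mem_cons.mp hp with h | h
      · subst h; exact ⟨by linarith [hlastR.1], by linarith [hlastR.2]⟩
      rcases List.mem_append.mp h with h' | h'
      · have := hmax p (List.mem_cons_of_mem _ h')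
        exact ⟨by linarith [hlastR.1, this.1], by linarith [hlastR.2, this.2]⟩
      · simp only [List.mem_singleton] at h'
        subst h'; exact ⟨le_rfl, le_rfl⟩
    · intro t ht
      show kink bL k (φ' t) = t + (b0 - a0)
      rw [hbelow t ht, kink_le]
      have : t + (b0 - a0) = φ' t := (hbelow t ht).symm
      rw [this]
      calc φ' t ≤ φ' aL := hmono.monotone (le_trans ht ha0aL)
        _ = bL := haLbL
    · intro p hp
      show kink bL k (φ' p.1) = p.2
      rcases List.mem_append.mp hp with h' | h'
      · rw [hanch p h', kink_le (hmax p (List.mem_cons_of_mem _ h')).2]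
      · simp only [List.mem_singleton] at h'
        subst h'; exact hφpr
    · intro t ht
      have h1 : aL ≤ t := le_trans hlastR.1.le ht
      show kink bL k (φ' t) = pr.2 + k * s * (t - pr.1)
      rw [htail t h1, kink_ge (by nlinarith), ← haux]
      ring
    · intro t h1 h2
      show |kink bL k (φ' t) - t| ≤ δ
      rcases le_total t aL with h | h
      · rw [kink_le]
        · exact hbound t h1 h
        · calc φ' t ≤ φ' aL := hmono.monotone h
            _ = bL := haLbL
      · have hφt : kink bL k (φ' t) = (k * s) * t + (bL - k * s * aL) := by
          rw [htail t h, kink_ge (by nlinarith)]; ring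
        rw [hφt]
        refine affine_abs_bound hlastR.1.le ?_ ?_ t h h2
        · rw [show k * s * aL + (bL - k * s * aL) - aL = -(aL - bL) by ring, abs_neg]
          exact hALδ
        · rw [show k * s * pr.1 + (bL - k * s * aL) - pr.1
              = (bL + k * (s * (pr.1 - aL))) - pr.1 by ring, haux, ← abs_neg,
            show -(pr.2 - pr.1) = pr.1 - pr.2 by ring]
          exact hclose pr (List.mem_append_right _ (by simp))



lemma exists_anchored_tc (δ : ℝ) (hδ : 0 ≤ δ) (pairs : List (ℝ × ℝ))
    (hpw : List.Pairwise (fun p q : ℝ × ℝ => p.1 < q.1 ∧ p.2 < q.2)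
      ((0, 0) :: (pairs ++ [(1, 1)])))
    (hclose : ∀ p ∈ pairs, |p.1 - p.2| ≤ δ) :
    ∃ lam ∈ TimeChanges, (∀ t : unitInterval, |((lam t : ℝ)) - (t : ℝ)| ≤ δ) ∧
      (∀ p ∈ pairs, ∀ t : unitInterval, (t : ℝ) = p.1 → ((lam t : ℝ)) = p.2) := by
  obtain ⟨φ, aL, bL, s, hmono, hsurj, hs, hmem, hmax, hbelow, hanch, htail, hbound⟩ :=
    kink_ind δ hδ (pairs ++ [(1,1)]) 0 0 (by simpa using hδ) hpw (by
      intro p hp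
      rcases List.mem_append.mp hp with h | h
      · exact hclose p h
      · simp only [List.mem_singleton] at h
        subst h
        simpa using hδ)
  have h11 : ((1:ℝ),(1:ℝ)) ∈ ((0:ℝ),(0:ℝ)) :: (pairs ++ [(1,1)]) :=
    List.mem_cons_of_mem _ (List.mem_append_right _ (by simp))
  have haL1 : 1 ≤ aL := (hmax _ h11).1
  have hrel : ∀ p ∈ pairs, p.1 < 1 ∧ p.2 < 1 := by
    intro p hp
    have h2 := (List.pairwise_cons.mp hpw).2
    exact (List.pairwise_append.mp h2).2.2 p hp (1,1) (by simp)
  have haLeq : aL = 1 ∧ bL = 1 := by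
    rcases List.mem_cons.mp hmem with h | h
    · exfalso
      have h1 : aL = 0 := congrArg Prod.fst h
      linarith
    rcases List.mem_append.mp h with h | h
    · exfalso
      have := (hrel _ h).1
      simp only at this
      linarith
    · simp only [List.mem_singleton] at h
      exact ⟨congrArg Prod.fst h, congrArg Prod.snd h⟩
  have hφ0 : φ 0 = 0 := by simpa using hbelow 0 le_rfl
  have hφ1 : φ 1 = 1 := by
    have := htail 1 haLeq.1.le
    rw [haLeq.1, haLeq.2] at this
    simpa using this
  have hmem01 : ∀ t : unitInterval, φ (t : ℝ) ∈ Set.Icc (0:ℝ) 1 := by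
    intro t
    constructor
    · rw [← hφ0]; exact hmono.monotone t.2.1
    · rw [← hφ1]; exact hmono.monotone t.2.2
  set lam : unitInterval → unitInterval := fun t => ⟨φ (t : ℝ), hmem01 t⟩ with hlam
  set e := StrictMono.orderIsoOfSurjective φ hmono hsurj with he
  have hecoe : ∀ t, e t = φ t := fun t => rfl
  have hlammono : StrictMono lam := by
    intro a b hab
    have : (a : ℝ) < (b : ℝ) := Subtype.coe_lt_coe.mpr hab
    exact Subtype.mk_lt_mk.mpr (hmono this)
  have he0 : e.symm 0 = 0 := by
    have h' : e 0 = 0 := by rw [hecoe, hφ0]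
    rw [OrderIso.symm_apply_eq]
    exact h'.symm
  have he1 : e.symm 1 = 1 := by
    have h' : e 1 = 1 := by rw [hecoe, hφ1]
    rw [OrderIso.symm_apply_eq]
    exact h'.symm
  refine ⟨lam, ⟨?_, hlammono, hlammono.injective, ?_⟩, ?_, ?_⟩
  · exact (e.continuous.comp continuous_subtype_val).subtype_mk _
  · intro y
    refine ⟨⟨e.symm (y : ℝ), ?_, ?_⟩, ?_⟩
    · rw [← he0]; exact e.symm.monotone y.2.1
    · rw [← he1]; exact e.symm.monotone y.2.2
    · apply Subtype.ext
      show φ (e.symm (y:ℝ)) = (y:ℝ)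
      rw [← hecoe, e.apply_symm_apply]
  · intro t
    exact hbound (t : ℝ) t.2.1 (le_trans t.2.2 haL1)
  · intro p hp t ht
    show φ (t : ℝ) = p.2
    rw [ht]
    exact hanch p (List.mem_append_left _ hp)


-- ===== oscillation package =====


lemma unit_nhdsLT_neBot {p : unitInterval} (hp : p ≠ 0) : (nhdsWithin p (Set.Iio p)).NeBot := by
  rw [← Filter.forall_mem_nonempty_iff_neBot]
  intro S hS
  obtain ⟨r, hr, hsub⟩ := Metric.mem_nhdsWithin_iff.mp hS
  have hppos : 0 < (p : ℝ) := by
    rcases lt_or_eq_of_le p.2.1 with h | h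
    · exact h
    · exact absurd (Subtype.ext h.symm) hp
  set qr : ℝ := (p : ℝ) - min (r/2) ((p : ℝ)/2) with hqr
  have h1 : 0 < qr := by
    have : min (r/2) ((p:ℝ)/2) ≤ (p:ℝ)/2 := min_le_right _ _
    simp only [hqr]; linarith
  have h2 : qr < (p : ℝ) := by
    have : 0 < min (r/2) ((p:ℝ)/2) := lt_min (by linarith) (by linarith)
    simp only [hqr]; linarith
  refine ⟨⟨qr, ⟨h1.le, le_trans h2.le p.2.2⟩⟩, hsub ⟨?_, ?_⟩⟩
  · rw [Metric.mem_ball, Subtype.dist_eq, Real.dist_eq]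
    show |qr - (p:ℝ)| < r
    rw [show qr - (p:ℝ) = -(min (r/2) ((p:ℝ)/2)) by rw [hqr]; ring, abs_neg,
      abs_of_pos (lt_min (by linarith) (by linarith))]
    exact lt_of_le_of_lt (min_le_left _ _) (by linarith)
  · show (⟨qr, ⟨h1.le, le_trans h2.le p.2.2⟩⟩ : unitInterval) < p
    rw [← Subtype.coe_lt_coe]
    exact h2

lemma cadlag_tendsto_leftLim {f : unitInterval → ℝ} (hf : IsCadlag f) {p : unitInterval}
    (hp : p ≠ 0) : Filter.Tendsto f (nhdsWithin p (Set.Iio p)) (nhds (Function.leftLim f p)) := by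
  obtain ⟨L, hL⟩ := hf.2 p
  have := unit_nhdsLT_neBot hp
  rwa [leftLim_eq_of_tendsto hL]

lemma osc_package {f : unitInterval → ℝ} (hf : IsCadlag f) {ε : ℝ} (hε : 0 < ε) :
    ∃ (B : Finset unitInterval) (δ0 : ℝ), 0 < δ0 ∧
      (∀ q : unitInterval, q ∉ B → q ≠ 0 → |f q - Function.leftLim f q| ≤ ε) ∧
      (∀ s t : unitInterval, s ≤ t → (t : ℝ) - (s : ℝ) ≤ δ0 →
        (∀ q : unitInterval, s < q → q ≤ t → |f q - Function.leftLim f q| ≤ ε) →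
        |f t - f s| ≤ 3 * ε) := by
  have key : ∀ p : unitInterval, ∃ δ > 0,
      (∀ s : unitInterval, p ≤ s → (s : ℝ) < (p : ℝ) + δ → |f s - f p| ≤ ε/2) ∧
      (p ≠ 0 → ∀ s : unitInterval, (p : ℝ) - δ < (s : ℝ) → s < p →
        |f s - Function.leftLim f p| ≤ ε/2) := by
    intro p
    obtain ⟨δ1, hδ1, h1⟩ := Metric.tendsto_nhdsWithin_nhds.mp (hf.1 p) (ε/2) (by linarith)
    by_cases hp : p = 0
    · refine ⟨δ1, hδ1, ?_, fun h => absurd hp h⟩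
      intro s hs1 hs2
      have := h1 (mem_Ici.mpr hs1) (by
        rw [Subtype.dist_eq, Real.dist_eq, abs_of_nonneg (by exact sub_nonneg.mpr hs1)]
        linarith)
      rw [Real.dist_eq] at this
      exact this.le
    · obtain ⟨δ2, hδ2, h2⟩ := Metric.tendsto_nhdsWithin_nhds.mp
        (cadlag_tendsto_leftLim hf hp) (ε/2) (by linarith)
      refine ⟨min δ1 δ2, lt_min hδ1 hδ2, ?_, ?_⟩
      · intro s hs1 hs2
        have := h1 (mem_Ici.mpr hs1) (by
          rw [Subtype.dist_eq, Real.dist_eq, abs_of_nonneg (by exact sub_nonneg.mpr hs1)]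
          have : min δ1 δ2 ≤ δ1 := min_le_left _ _
          linarith)
        rw [Real.dist_eq] at this
        exact this.le
      · intro _ s hs1 hs2
        have := h2 (mem_Iio.mpr hs2) (by
          rw [Subtype.dist_eq, Real.dist_eq, abs_of_nonpos (by
            have : (s:ℝ) < (p:ℝ) := Subtype.coe_lt_coe.mpr hs2
            linarith)]
          have : min δ1 δ2 ≤ δ2 := min_le_right _ _
          linarith)
        rw [Real.dist_eq] at this
        exact this.le
  choose δp hδp hR hL using key
  obtain ⟨δL, hδL, hleb⟩ := lebesgue_number_lemma_of_metric isCompact_univ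
    (fun p : unitInterval => Metric.isOpen_ball (x := p) (ε := δp p))
    (fun t _ => mem_iUnion.mpr ⟨t, Metric.mem_ball_self (hδp t)⟩)
  obtain ⟨B, hB⟩ := isCompact_univ.elim_finite_subcover
    (fun p : unitInterval => Metric.ball p (δp p)) (fun p => Metric.isOpen_ball)
    (fun t _ => mem_iUnion.mpr ⟨t, Metric.mem_ball_self (hδp t)⟩)
  refine ⟨B, δL/2, by linarith, ?_, ?_⟩
  · -- jumps outside B are small
    intro q hqB hq0
    obtain ⟨p, hp, hqp⟩ : ∃ p ∈ B, q ∈ Metric.ball p (δp p) := by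
      have := hB (mem_univ q)
      simpa using this
    have hqnep : q ≠ p := fun h => hqB (h ▸ hp)
    rw [Metric.mem_ball, Subtype.dist_eq, Real.dist_eq, abs_sub_lt_iff] at hqp
    have hlim := cadlag_tendsto_leftLim hf hq0
    have hev : ∀ᶠ s in nhdsWithin q (Set.Iio q), |f s - f q| ≤ ε := by
      rcases lt_or_gt_of_ne (fun h => hqnep (Subtype.ext h) :
          (q:ℝ) ≠ (p:ℝ)) with hlt | hgt
      · -- q < p : use left data at p
        have hmem : Metric.ball q ((δp p) - ((p:ℝ) - (q:ℝ))) ∩ Set.Iio q ∈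
            nhdsWithin q (Set.Iio q) := by
          exact inter_mem (mem_nhdsWithin_of_mem_nhds
            (Metric.ball_mem_nhds _ (by linarith [hqp.2]))) self_mem_nhdsWithin
        filter_upwards [hmem] with s hs
        obtain ⟨hs1, hs2⟩ := hs
        rw [Metric.mem_ball, Subtype.dist_eq, Real.dist_eq, abs_sub_lt_iff] at hs1
        have hp0 : p ≠ 0 := by
          intro h
          rw [h] at hlt
          exact absurd (lt_of_le_of_lt q.2.1 hlt) (by norm_num)
        have e1 := hL p hp0 s (by linarith [hs1.2]) (lt_trans hs2 (Subtype.coe_lt_coe.mp hlt))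
        have e2 := hL p hp0 q (by linarith [hqp.2]) (Subtype.coe_lt_coe.mp hlt)
        calc |f s - f q| ≤ |f s - Function.leftLim f p| + |Function.leftLim f p - f q| := by
              have := abs_sub_le (f s) (Function.leftLim f p) (f q); linarith
          _ ≤ ε := by rw [abs_sub_comm (Function.leftLim f p) (f q)]; linarith
      · -- p < q
        have hmem : Metric.ball q ((q:ℝ) - (p:ℝ)) ∩ Set.Iio q ∈
            nhdsWithin q (Set.Iio q) := by
          exact inter_mem (mem_nhdsWithin_of_mem_nhds
            (Metric.ball_mem_nhds _ (by linarith))) self_mem_nhdsWithin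
        filter_upwards [hmem] with s hs
        obtain ⟨hs1, hs2⟩ := hs
        rw [Metric.mem_ball, Subtype.dist_eq, Real.dist_eq, abs_sub_lt_iff] at hs1
        have hps : p ≤ s := by
          apply Subtype.coe_le_coe.mp
          linarith [hs1.1]
        have hsq : (s:ℝ) < (q:ℝ) := Subtype.coe_lt_coe.mpr hs2
        have e1 := hR p s hps (by linarith [hqp.1])
        have e2 := hR p q (Subtype.coe_le_coe.mp hgt.le) (by linarith [hqp.1])
        calc |f s - f q| ≤ |f s - f p| + |f p - f q| := by
              have := abs_sub_le (f s) (f p) (f q); linarith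
          _ ≤ ε := by rw [abs_sub_comm (f p) (f q)]; linarith
    have := unit_nhdsLT_neBot hq0
    have hlimabs : Filter.Tendsto (fun s => |f s - f q|) (nhdsWithin q (Set.Iio q))
        (nhds (|Function.leftLim f q - f q|)) := ((hlim.sub_const (f q)).abs)
    have hle := le_of_tendsto hlimabs hev
    rwa [abs_sub_comm] at hle
  · -- oscillation bound
    intro s t hst hclose hnojump
    obtain ⟨p, hsp⟩ := hleb s (mem_univ s)
    have htp : t ∈ Metric.ball p (δp p) := by
      apply hsp
      rw [Metric.mem_ball, Subtype.dist_eq, Real.dist_eq,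
        abs_of_nonneg (sub_nonneg.mpr (Subtype.coe_le_coe.mpr hst : (s:ℝ) ≤ (t:ℝ)))]
      linarith
    have hspb : s ∈ Metric.ball p (δp p) := hsp (Metric.mem_ball_self (by linarith))
    rw [Metric.mem_ball, Subtype.dist_eq, Real.dist_eq, abs_sub_lt_iff] at htp hspb
    rcases le_or_gt p s with h1 | h1
    · -- p ≤ s ≤ t
      have e1 := hR p s h1 (by linarith [hspb.1])
      have e2 := hR p t (le_trans h1 hst) (by linarith [htp.1])
      calc |f t - f s| ≤ |f t - f p| + |f p - f s| := by
            have := abs_sub_le (f t) (f p) (f s); linarith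
        _ ≤ 3 * ε := by rw [abs_sub_comm (f p) (f s)]; linarith
    · rcases le_or_gt p t with h2 | h2
      · -- s < p ≤ t : jump at p is controlled by hnojump
        have hp0 : p ≠ 0 := by
          intro h
          rw [h] at h1
          exact absurd (lt_of_le_of_lt s.2.1 (Subtype.coe_lt_coe.mpr h1)) (by norm_num)
        have e1 := hL p hp0 s (by linarith [hspb.2]) h1
        have e2 := hR p t h2 (by linarith [htp.1])
        have e3 := hnojump p h1 h2
        calc |f t - f s| ≤ |f t - f p| + |f p - Function.leftLim f p|
              + |Function.leftLim f p - f s| := by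
              have u1 := abs_sub_le (f t) (f p) (f s)
              have u2 := abs_sub_le (f p) (Function.leftLim f p) (f s)
              linarith
          _ ≤ 3 * ε := by
              rw [abs_sub_comm (Function.leftLim f p) (f s)]
              linarith
      · -- s ≤ t < p
        have hp0 : p ≠ 0 := by
          intro h
          rw [h] at h2
          exact absurd (lt_of_le_of_lt t.2.1 (Subtype.coe_lt_coe.mpr h2)) (by norm_num)
        have e1 := hL p hp0 s (by linarith [hspb.2]) (lt_of_le_of_lt hst h2)
        have e2 := hL p hp0 t (by linarith [htp.2]) h2
        calc |f t - f s| ≤ |f t - Function.leftLim f p| + |Function.leftLim f p - f s| := by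
              have := abs_sub_le (f t) (Function.leftLim f p) (f s); linarith
          _ ≤ 3 * ε := by rw [abs_sub_comm (Function.leftLim f p) (f s)]; linarith


lemma tc_le_iff {lam : unitInterval → unitInterval} (h : lam ∈ TimeChanges)
    {a q : unitInterval} (ha : lam a = q) (t : unitInterval) : q ≤ lam t ↔ a ≤ t := by
  rw [← ha]
  exact ⟨fun h' => (h.2.1.le_iff_le).mp h', fun h' => h.2.1.monotone h'⟩

lemma coe_pos_of_ne_zero {q : unitInterval} (h : q ≠ 0) : 0 < (q : ℝ) :=
  lt_of_le_of_ne q.2.1 (fun he => h (Subtype.ext he.symm))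

lemma coe_lt_one_of_ne_one {q : unitInterval} (h : q ≠ 1) : (q : ℝ) < 1 :=
  lt_of_le_of_ne q.2.2 (fun he => h (Subtype.ext he))

lemma core_continuity (ξ ζ : D)
    (hdisj : ∀ t : unitInterval, t ≠ 0 →
      (ξ.toFun t - Function.leftLim ξ.toFun t) *
        (ζ.toFun t - Function.leftLim ζ.toFun t) = 0)
    {ε : ℝ} (hε : 0 < ε) :
    ∃ δ > 0, ∀ ξ' ζ' : D, dJ1 ξ ξ' < δ → dJ1 ζ ζ' < δ →
      ∃ lam ∈ TimeChanges, (∀ t : unitInterval, |((lam t : ℝ)) - (t : ℝ)| ≤ ε) ∧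
        (∀ t : unitInterval,
          |(ξ.toFun (lam t) - ζ.toFun (lam t)) - (ξ'.toFun t - ζ'.toFun t)| ≤ ε) := by
  classical
  set ε2 := ε/8 with hε2def
  have hε2 : 0 < ε2 := by rw [hε2def]; linarith
  obtain ⟨Bξ, δ0ξ, hδ0ξ, hP1ξ, hP2ξ⟩ := osc_package ξ.cadlag hε2
  obtain ⟨Bζ, δ0ζ, hδ0ζ, hP1ζ, hP2ζ⟩ := osc_package ζ.cadlag hε2
  set bigξ : Finset unitInterval := Bξ.filter
    (fun q => q ≠ 0 ∧ ε2 < |ξ.toFun q - Function.leftLim ξ.toFun q|) with hbigξdef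
  set bigζ : Finset unitInterval := Bζ.filter
    (fun q => q ≠ 0 ∧ ε2 < |ζ.toFun q - Function.leftLim ζ.toFun q|) with hbigζdef
  have hbigξmem : ∀ q : unitInterval, q ≠ 0 →
      ε2 < |ξ.toFun q - Function.leftLim ξ.toFun q| → q ∈ bigξ := by
    intro q h0 hq
    rw [hbigξdef, Finset.mem_filter]
    refine ⟨?_, h0, hq⟩
    by_contra hB
    exact absurd hq (not_lt.mpr (hP1ξ q hB h0))
  have hbigζmem : ∀ q : unitInterval, q ≠ 0 →
      ε2 < |ζ.toFun q - Function.leftLim ζ.toFun q| → q ∈ bigζ := by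
    intro q h0 hq
    rw [hbigζdef, Finset.mem_filter]
    refine ⟨?_, h0, hq⟩
    by_contra hB
    exact absurd hq (not_lt.mpr (hP1ζ q hB h0))
  have hbigdisj : ∀ q : unitInterval, ¬(q ∈ bigξ ∧ q ∈ bigζ) := by
    rintro q ⟨h1, h2⟩
    rw [hbigξdef, Finset.mem_filter] at h1
    rw [hbigζdef, Finset.mem_filter] at h2
    have := hdisj q h1.2.1
    rcases mul_eq_zero.mp this with h | h
    · rw [h] at h1; simp at h1; linarith [h1.2.2]
    · rw [h] at h2; simp at h2; linarith [h2.2.2]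
  set K : Finset unitInterval := (bigξ ∪ bigζ).filter (fun q => q ≠ 1) with hKdef
  have hKne0 : ∀ q ∈ K, q ≠ 0 := by
    intro q hq
    rw [hKdef, Finset.mem_filter, Finset.mem_union] at hq
    rcases hq.1 with h | h
    · exact ((Finset.mem_filter.mp h).2).1
    · exact ((Finset.mem_filter.mp h).2).1
  have hKne1 : ∀ q ∈ K, q ≠ 1 := by
    intro q hq
    exact (Finset.mem_filter.mp hq).2
  set A : Finset ℝ := ((K.image (fun q : unitInterval => (q:ℝ)/2)) ∪
      (K.image (fun q : unitInterval => (1 - (q:ℝ))/2))) ∪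
      ((((K ×ˢ K).filter (fun pq => pq.1 ≠ pq.2)).image
        (fun pq : unitInterval × unitInterval => |(pq.1:ℝ) - (pq.2:ℝ)|/4)) ∪ {1}) with hAdef
  have hA1 : (1:ℝ) ∈ A := by
    rw [hAdef]
    apply Finset.mem_union_right
    apply Finset.mem_union_right
    simp
  set r := A.min' ⟨1, hA1⟩ with hrdef
  have hrle : ∀ a ∈ A, r ≤ a := fun a ha => Finset.min'_le A a ha
  have hrpos : 0 < r := by
    have hrmem : r ∈ A := Finset.min'_mem A ⟨1, hA1⟩
    rw [hAdef] at hrmem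
    rcases Finset.mem_union.mp hrmem with h | h
    · rcases Finset.mem_union.mp h with h' | h'
      · obtain ⟨q, hq, heq⟩ := Finset.mem_image.mp h'
        rw [← heq]
        have := coe_pos_of_ne_zero (hKne0 q hq)
        linarith
      · obtain ⟨q, hq, heq⟩ := Finset.mem_image.mp h'
        rw [← heq]
        have := coe_lt_one_of_ne_one (hKne1 q hq)
        linarith
    · rcases Finset.mem_union.mp h with h' | h'
      · obtain ⟨pq, hpq, heq⟩ := Finset.mem_image.mp h'
        rw [← heq]
        have hne := (Finset.mem_filter.mp hpq).2
        have : (pq.1:ℝ) ≠ (pq.2:ℝ) := fun he => hne (Subtype.ext he)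
        have habs : 0 < |(pq.1:ℝ) - (pq.2:ℝ)| := abs_pos.mpr (sub_ne_zero.mpr this)
        linarith
      · simp only [Finset.mem_singleton] at h'
        rw [h']; norm_num
  have hr1 : ∀ q ∈ K, r ≤ (q:ℝ)/2 := by
    intro q hq
    exact hrle _ (by
      rw [hAdef]
      exact Finset.mem_union_left _ (Finset.mem_union_left _
        (Finset.mem_image_of_mem _ hq)))
  have hr2 : ∀ q ∈ K, r ≤ (1 - (q:ℝ))/2 := by
    intro q hq
    exact hrle _ (by
      rw [hAdef]
      exact Finset.mem_union_left _ (Finset.mem_union_right _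
        (Finset.mem_image_of_mem _ hq)))
  have hr3 : ∀ p ∈ K, ∀ q ∈ K, p ≠ q → r ≤ |(p:ℝ) - (q:ℝ)|/4 := by
    intro p hp q hq hne
    refine hrle _ ?_
    rw [hAdef]
    apply Finset.mem_union_right
    apply Finset.mem_union_left
    have hmemf : (p, q) ∈ (K ×ˢ K).filter (fun pq => pq.1 ≠ pq.2) := by
      rw [Finset.mem_filter]
      exact ⟨Finset.mem_product.mpr ⟨hp, hq⟩, hne⟩
    exact Finset.mem_image_of_mem _ hmemf
  set δ := min (min (r/2) ε2) (min (δ0ξ/2) (δ0ζ/2)) with hδdef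
  have hδpos : 0 < δ := by
    rw [hδdef]
    exact lt_min (lt_min (by linarith) hε2) (lt_min (by linarith) (by linarith))
  have hδr : δ ≤ r/2 := le_trans (min_le_left _ _) (min_le_left _ _)
  have hδε2 : δ ≤ ε2 := le_trans (min_le_left _ _) (min_le_right _ _)
  have hδ0ξ' : δ ≤ δ0ξ/2 := le_trans (min_le_right _ _) (min_le_left _ _)
  have hδ0ζ' : δ ≤ δ0ζ/2 := le_trans (min_le_right _ _) (min_le_right _ _)
  refine ⟨δ, hδpos, ?_⟩
  intro ξ' ζ' h1 h2
  obtain ⟨lam1, hlam1, hlam1a, hlam1b⟩ := exists_tc_of_dJ1_lt h1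
  obtain ⟨lam2, hlam2, hlam2a, hlam2b⟩ := exists_tc_of_dJ1_lt h2
  obtain ⟨l1i, hl1i, hl1i1, hl1i2⟩ := tc_inv hlam1
  obtain ⟨l2i, hl2i, hl2i1, hl2i2⟩ := tc_inv hlam2
  have hl1ic : ∀ t : unitInterval, |((l1i t : ℝ)) - (t:ℝ)| < δ := by
    intro t
    have := hlam1a (l1i t)
    rw [hl1i1 t] at this
    rwa [abs_sub_comm] at this
  have hl2ic : ∀ t : unitInterval, |((l2i t : ℝ)) - (t:ℝ)| < δ := by
    intro t
    have := hlam2a (l2i t)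
    rw [hl2i1 t] at this
    rwa [abs_sub_comm] at this
  set aq : unitInterval → unitInterval := fun q => if q ∈ bigξ then l1i q else l2i q
    with haqdef
  have haqc : ∀ q : unitInterval, |((aq q : ℝ)) - (q:ℝ)| < δ := by
    intro q
    rw [haqdef]
    by_cases h : q ∈ bigξ
    · simp only [if_pos h]; exact hl1ic q
    · simp only [if_neg h]; exact hl2ic q
  set Lq : List unitInterval := K.sort (· ≤ ·) with hLqdef
  have hLqmem : ∀ q ∈ Lq, q ∈ K := fun q hq => (Finset.mem_sort _).mp hq
  set pairs : List (ℝ × ℝ) := Lq.map (fun q => ((aq q : ℝ), (q : ℝ))) with hpairsdef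
  have hsep : ∀ p ∈ K, ∀ q ∈ K, p < q → (aq p : ℝ) < (aq q : ℝ) ∧ (p:ℝ) < (q:ℝ) := by
    intro p hp q hq hpq
    have h4r := hr3 p hp q hq (ne_of_lt hpq)
    have hlt : (p:ℝ) < (q:ℝ) := Subtype.coe_lt_coe.mpr hpq
    rw [abs_of_nonpos (by linarith)] at h4r
    have c1 := haqc p
    have c2 := haqc q
    rw [abs_sub_lt_iff] at c1 c2
    constructor
    · linarith [c1.1, c2.2]
    · exact hlt
  have hpwpairs : pairs.Pairwise (fun p q : ℝ × ℝ => p.1 < q.1 ∧ p.2 < q.2) := by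
    rw [hpairsdef, List.pairwise_map]
    have hsorted : Lq.Pairwise (· < ·) := K.sortedLT_sort.pairwise
    refine hsorted.imp_of_mem ?_
    intro a b ha hb hab
    exact hsep a (hLqmem a ha) b (hLqmem b hb) hab
  have hKbounds : ∀ q ∈ K, 2*r ≤ (q:ℝ) ∧ (q:ℝ) ≤ 1 - 2*r := by
    intro q hq
    constructor
    · linarith [hr1 q hq]
    · linarith [hr2 q hq]
  have hpw : List.Pairwise (fun p q : ℝ × ℝ => p.1 < q.1 ∧ p.2 < q.2)
      (((0:ℝ),(0:ℝ)) :: (pairs ++ [(1,1)])) := by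
    rw [List.pairwise_cons]
    constructor
    · intro b hb
      rcases List.mem_append.mp hb with h | h
      · rw [hpairsdef] at h
        obtain ⟨q, hq, rfl⟩ := List.mem_map.mp h
        have hqK := hLqmem q hq
        have hb1 := (hKbounds q hqK).1
        have hc := haqc q
        rw [abs_sub_lt_iff] at hc
        constructor
        · show (0:ℝ) < (aq q : ℝ)
          linarith [hc.2, hδr]
        · show (0:ℝ) < (q:ℝ)
          linarith
      · simp only [List.mem_singleton] at h
        subst h
        constructor <;> norm_num
    · rw [List.pairwise_append]
      refine ⟨hpwpairs, by simp, ?_⟩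
      intro a ha b hb
      simp only [List.mem_singleton] at hb
      subst hb
      rw [hpairsdef] at ha
      obtain ⟨q, hq, rfl⟩ := List.mem_map.mp ha
      have hqK := hLqmem q hq
      have hb2 := (hKbounds q hqK).2
      have hc := haqc q
      rw [abs_sub_lt_iff] at hc
      constructor
      · show (aq q : ℝ) < 1
        linarith [hc.1, hδr]
      · show (q:ℝ) < 1
        linarith [hrpos]
  obtain ⟨lam, hlamtc, hlambound, hlamanch⟩ := exists_anchored_tc δ hδpos.le pairs hpw (by
    intro p hp
    rw [hpairsdef] at hp
    obtain ⟨q, hq, rfl⟩ := List.mem_map.mp hp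
    exact (haqc q).le)
  have hanchor : ∀ q ∈ K, lam (aq q) = q := by
    intro q hq
    have hmem : ((aq q : ℝ), (q:ℝ)) ∈ pairs := by
      rw [hpairsdef]
      exact List.mem_map_of_mem ((Finset.mem_sort _).mpr hq)
    exact Subtype.ext (hlamanch _ hmem (aq q) rfl)
  -- anchored equalities for big jump points, including the endpoint 1
  have hanchξ : ∀ q ∈ bigξ, lam (l1i q) = q := by
    intro q hq
    by_cases h1' : q = 1
    · subst h1'
      rw [tc_one hl1i, tc_one hlamtc]
    · have hqK : q ∈ K := by
        rw [hKdef, Finset.mem_filter]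
        exact ⟨Finset.mem_union_left _ hq, h1'⟩
      have hveq : aq q = l1i q := if_pos hq
      have := hanchor q hqK
      rwa [hveq] at this
  have hanchζ : ∀ q ∈ bigζ, lam (l2i q) = q := by
    intro q hq
    by_cases h1' : q = 1
    · subst h1'
      rw [tc_one hl2i, tc_one hlamtc]
    · have hqK : q ∈ K := by
        rw [hKdef, Finset.mem_filter]
        refine ⟨Finset.mem_union_right _ hq, h1'⟩
      have hnξ : q ∉ bigξ := fun h => hbigdisj q ⟨h, hq⟩
      have hveq : aq q = l2i q := if_neg hnξ
      have := hanchor q hqK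
      rwa [hveq] at this
  have hstrξ : ∀ q ∈ bigξ, ∀ t, (q ≤ lam t ↔ q ≤ lam1 t) := by
    intro q hq t
    rw [tc_le_iff hlamtc (hanchξ q hq) t, tc_le_iff hlam1 (hl1i1 q) t]
  have hstrζ : ∀ q ∈ bigζ, ∀ t, (q ≤ lam t ↔ q ≤ lam2 t) := by
    intro q hq t
    rw [tc_le_iff hlamtc (hanchζ q hq) t, tc_le_iff hlam2 (hl2i1 q) t]
  -- oscillation control
  have hoscξ : ∀ t, |ξ.toFun (lam t) - ξ.toFun (lam1 t)| ≤ 3 * ε2 := by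
    intro t
    have hd1 := hlambound t
    have hd2 := (hlam1a t).le
    rw [abs_le] at hd1 hd2
    rcases le_total (lam t) (lam1 t) with h | h
    · have hcl : ((lam1 t : ℝ)) - ((lam t : ℝ)) ≤ δ0ξ := by linarith [hd1.1, hd2.2]
      have := hP2ξ (lam t) (lam1 t) h hcl (by
        intro q hq1 hq2
        by_contra hc
        push_neg at hc
        have hq0 : q ≠ 0 := by
          intro h0
          subst h0
          exact absurd hq1 (not_lt.mpr (Subtype.coe_le_coe.mp (lam t).2.1))
        have hqbig : q ∈ bigξ := hbigξmem q hq0 hc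
        have := (hstrξ q hqbig t).mpr hq2
        exact absurd hq1 (not_lt.mpr this))
      rwa [abs_sub_comm] at this
    · have hcl : ((lam t : ℝ)) - ((lam1 t : ℝ)) ≤ δ0ξ := by linarith [hd1.2, hd2.1]
      exact hP2ξ (lam1 t) (lam t) h hcl (by
        intro q hq1 hq2
        by_contra hc
        push_neg at hc
        have hq0 : q ≠ 0 := by
          intro h0
          subst h0
          exact absurd hq1 (not_lt.mpr (Subtype.coe_le_coe.mp (lam1 t).2.1))
        have hqbig : q ∈ bigξ := hbigξmem q hq0 hc
        have := (hstrξ q hqbig t).mp hq2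
        exact absurd hq1 (not_lt.mpr this))
  have hoscζ : ∀ t, |ζ.toFun (lam t) - ζ.toFun (lam2 t)| ≤ 3 * ε2 := by
    intro t
    have hd1 := hlambound t
    have hd2 := (hlam2a t).le
    rw [abs_le] at hd1 hd2
    rcases le_total (lam t) (lam2 t) with h | h
    · have hcl : ((lam2 t : ℝ)) - ((lam t : ℝ)) ≤ δ0ζ := by linarith [hd1.1, hd2.2]
      have := hP2ζ (lam t) (lam2 t) h hcl (by
        intro q hq1 hq2
        by_contra hc
        push_neg at hc
        have hq0 : q ≠ 0 := by
          intro h0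
          subst h0
          exact absurd hq1 (not_lt.mpr (Subtype.coe_le_coe.mp (lam t).2.1))
        have hqbig : q ∈ bigζ := hbigζmem q hq0 hc
        have := (hstrζ q hqbig t).mpr hq2
        exact absurd hq1 (not_lt.mpr this))
      rwa [abs_sub_comm] at this
    · have hcl : ((lam t : ℝ)) - ((lam2 t : ℝ)) ≤ δ0ζ := by linarith [hd1.2, hd2.1]
      exact hP2ζ (lam2 t) (lam t) h hcl (by
        intro q hq1 hq2
        by_contra hc
        push_neg at hc
        have hq0 : q ≠ 0 := by
          intro h0
          subst h0
          exact absurd hq1 (not_lt.mpr (Subtype.coe_le_coe.mp (lam2 t).2.1))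
        have hqbig : q ∈ bigζ := hbigζmem q hq0 hc
        have := (hstrζ q hqbig t).mp hq2
        exact absurd hq1 (not_lt.mpr this))
  refine ⟨lam, hlamtc, ?_, ?_⟩
  · intro t
    have hδle : δ ≤ ε := by linarith [hε2def, hδε2]
    linarith [hlambound t]
  · intro t
    have e1 : |ξ.toFun (lam t) - ξ'.toFun t| ≤ 3 * ε2 + δ := by
      have := hlam1b t
      have := hoscξ t
      calc |ξ.toFun (lam t) - ξ'.toFun t|
          ≤ |ξ.toFun (lam t) - ξ.toFun (lam1 t)| + |ξ.toFun (lam1 t) - ξ'.toFun t| := by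
            have := abs_sub_le (ξ.toFun (lam t)) (ξ.toFun (lam1 t)) (ξ'.toFun t)
            linarith
        _ ≤ 3 * ε2 + δ := by linarith [hlam1b t, hoscξ t]
    have e2 : |ζ.toFun (lam t) - ζ'.toFun t| ≤ 3 * ε2 + δ := by
      calc |ζ.toFun (lam t) - ζ'.toFun t|
          ≤ |ζ.toFun (lam t) - ζ.toFun (lam2 t)| + |ζ.toFun (lam2 t) - ζ'.toFun t| := by
            have := abs_sub_le (ζ.toFun (lam t)) (ζ.toFun (lam2 t)) (ζ'.toFun t)
            linarith
        _ ≤ 3 * ε2 + δ := by linarith [hlam2b t, hoscζ t]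
    have : (ξ.toFun (lam t) - ζ.toFun (lam t)) - (ξ'.toFun t - ζ'.toFun t)
        = (ξ.toFun (lam t) - ξ'.toFun t) - (ζ.toFun (lam t) - ζ'.toFun t) := by ring
    rw [this]
    calc |(ξ.toFun (lam t) - ξ'.toFun t) - (ζ.toFun (lam t) - ζ'.toFun t)|
        ≤ |ξ.toFun (lam t) - ξ'.toFun t| + |ζ.toFun (lam t) - ζ'.toFun t| := abs_sub _ _
      _ ≤ ε := by
          have h8 : ε2 = ε / 8 := hε2def
          linarith


/-- The map `h(ξ,ζ) = ξ - ζ` is continuous at every pair of paths with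
no common jump times, and the `h`-preimage of a set bounded away from `D_{<j,k}` is
bounded away from `D_{<(j,k)} = ⋃_{(l,m) ∈ I_{<j,k}} D_l × D_m`. -/
theorem subtraction_mapping_theorem (α β : ℝ) (hα : 1 < α) (hβ : 1 < β) :
    (∀ ξ ζ : D,
      (∀ t : unitInterval, t ≠ 0 →
        (ξ.toFun t - Function.leftLim ξ.toFun t) *
          (ζ.toFun t - Function.leftLim ζ.toFun t) = 0) →
      ContinuousAt (fun p : D × D => Dsub p.1 p.2) (ξ, ζ)) ∧
    (∀ j k : ℕ, ∀ A : Set D, BddAway dJ1 A (Dlt2 α β j k) →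
      BddAway (fun p q : D × D => max (dJ1 p.1 q.1) (dJ1 p.2 q.2))
        {p : D × D | Dsub p.1 p.2 ∈ A}
        {p : D × D | ∃ l m : ℕ, ((l, m) ≠ (j, k) ∧
          (α - 1) * l + (β - 1) * m ≤ (α - 1) * j + (β - 1) * k) ∧
          p.1 ∈ Dstep l ∧ p.2 ∈ Dstep m}) := by
  constructor
  · intro ξ ζ hdisj
    rw [ContinuousAt]
    show Filter.Tendsto _ _ (nhds (Dsub ξ ζ))
    refine TopologicalSpace.tendsto_nhds_generateFrom_iff.mpr ?_
    rintro s ⟨x, ε, rfl⟩ hmem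
    have hc : dJ1 x (Dsub ξ ζ) < ε := hmem
    set c := dJ1 x (Dsub ξ ζ) with hcdef
    have hcnn : 0 ≤ c := dJ1_nonneg _ _
    set ε1 := (ε - c)/2 with hε1def
    have hε1 : 0 < ε1 := by rw [hε1def]; linarith
    obtain ⟨lam0, hlam0, h0a, h0b⟩ := exists_tc_of_dJ1_lt
      (show dJ1 x (Dsub ξ ζ) < c + ε1 by rw [← hcdef]; linarith)
    obtain ⟨δc, hδc, hcore⟩ := core_continuity ξ ζ hdisj (ε := ε1/2) (by linarith)
    refine Filter.mem_of_superset (prod_mem_nhds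
      (IsOpen.mem_nhds (TopologicalSpace.isOpen_generateFrom_of_mem ⟨ξ, δc, rfl⟩) ?_)
      (IsOpen.mem_nhds (TopologicalSpace.isOpen_generateFrom_of_mem ⟨ζ, δc, rfl⟩) ?_)) ?_
    · show dJ1 ξ ξ < δc
      rw [dJ1_self]; exact hδc
    · show dJ1 ζ ζ < δc
      rw [dJ1_self]; exact hδc
    · rintro ⟨ξ', ζ'⟩ ⟨hξ', hζ'⟩
      show dJ1 x (Dsub ξ' ζ') < ε
      obtain ⟨lam, hlamtc, hbnd, hfn⟩ := hcore ξ' ζ' hξ' hζ'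
      have hle : dJ1 x (Dsub ξ' ζ') ≤ (c + ε1) + ε1/2 := by
        refine dJ1_le_of_bounds (tc_comp hlam0 hlamtc) (by linarith) (fun t => ?_) (fun t => ?_)
        · have b1 := (h0a (lam t)).le
          have b2 := hbnd t
          calc |((lam0 (lam t) : ℝ)) - (t : ℝ)|
              ≤ |((lam0 (lam t) : ℝ)) - ((lam t : ℝ))| + |((lam t : ℝ)) - (t : ℝ)| :=
                abs_sub_le _ _ _
            _ ≤ (c + ε1) + ε1/2 := add_le_add b1 b2
        · have b1 := (h0b (lam t)).le
          have b2 := hfn t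
          have hD : (Dsub ξ ζ).toFun (lam t) = ξ.toFun (lam t) - ζ.toFun (lam t) := rfl
          have hD' : (Dsub ξ' ζ').toFun t = ξ'.toFun t - ζ'.toFun t := rfl
          calc |x.toFun (lam0 (lam t)) - (Dsub ξ' ζ').toFun t|
              ≤ |x.toFun (lam0 (lam t)) - (Dsub ξ ζ).toFun (lam t)|
                + |(Dsub ξ ζ).toFun (lam t) - (Dsub ξ' ζ').toFun t| := abs_sub_le _ _ _
            _ ≤ (c + ε1) + ε1/2 := by
                refine add_le_add b1 ?_
                rw [hD, hD']
                exact b2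
      have : (c + ε1) + ε1/2 < ε := by rw [hε1def]; linarith
      linarith
  · intro j k A hA
    exact part2_lemma α β hα hβ j k A hA

end
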